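/- Let a countable group G act by measurable measure-preserving transformations on a standard Borel probability space (X, μ), and assume the action is absolutely non-free. Then for every n ≥ 1 the symmetrized diagonal action is totally non-free; precisely: for every measurable set E ⊆ X^n that is invariant under all permutations of the n coordinates, there exists a set A in the σ-algebra generated by the sets Fix(g)^n = Fix(g)×⋯×Fix(g) ⊆ X^n, g ∈ G, such that μ^n(E Δ A) = 0, where μ^n is the n-fold product measure. -/

import Mathlib

open MeasureTheory
open scoped symmDiff ENNReal

/-- The set of fixed points of the action of `g` on `X`. -/
def fixedSet (G : Type*) {X : Type*} [SMul G X] (g : G) : Set X := {x : X | g • x = x}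

/-- An action is absolutely non-free if every measurable set can be approximated in measure,
arbitrarily well, by fixed-point sets of group elements. -/
def AbsolutelyNonFree (G : Type*) {X : Type*} [SMul G X] [MeasurableSpace X]
    (μ : Measure X) : Prop :=
  ∀ A : Set X, MeasurableSet A → ∀ ε : ℝ≥0∞, 0 < ε → ∃ g : G, μ (fixedSet G g ∆ A) < ε

/-- The `n`-fold power `Fix(g)ⁿ = Fix(g) × ⋯ × Fix(g)` of the fixed-point set of `g`. -/
def fixedPow (G : Type*) {X : Type*} [SMul G X] (n : ℕ) (g : G) : Set (Fin n → X) :=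
  {x : Fin n → X | ∀ i : Fin n, g • x i = x i}


namespace ANF
open MeasurableSpace Set
open scoped NNReal

variable {α : Type*}

lemma measurableSet_mem_iff [MeasurableSpace α] {s t : Set α} (hs : MeasurableSet s)
    (ht : MeasurableSet t) : MeasurableSet {x | x ∈ s ↔ x ∈ t} := by
  have h : {x | x ∈ s ↔ x ∈ t} = (s ∩ t) ∪ (sᶜ ∩ tᶜ) := by
    ext x; by_cases hx : x ∈ s <;> by_cases hx' : x ∈ t <;> simp [hx, hx']
  rw [h]
  exact (hs.inter ht).union (hs.compl.inter ht.compl)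

lemma eq_of_natGeneratingSequence [MeasurableSpace α] [CountablyGenerated α]
    [MeasurableSingletonClass α] {a b : α}
    (h : ∀ k : ℕ, a ∈ natGeneratingSequence α k ↔ b ∈ natGeneratingSequence α k) : a = b := by
  have key : ∀ s : Set α, MeasurableSet[generateFrom (range (natGeneratingSequence α))] s →
      (a ∈ s ↔ b ∈ s) := by
    intro s hs'
    induction s, hs' using generateFrom_induction with
    | hC t ht _ => obtain ⟨k, rfl⟩ := ht; exact h k
    | empty => simp
    | compl t ht iht => simp [iht]
    | iUnion f hf ihf => simp only [mem_iUnion]; exact exists_congr ihf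
  have hb : MeasurableSet[generateFrom (range (natGeneratingSequence α))] {b} := by
    rw [generateFrom_natGeneratingSequence]; exact measurableSet_singleton b
  simpa using (key {b} hb).mpr rfl

lemma exists_symmDiff_null {m' : MeasurableSpace α} {mα : MeasurableSpace α} (ν : Measure α)
    (E : Set α)
    (h : ∀ ε : ℝ≥0∞, 0 < ε → ∃ A, MeasurableSet[m'] A ∧ ν (E ∆ A) ≤ ε) :
    ∃ A, MeasurableSet[m'] A ∧ ν (E ∆ A) = 0 := by
  have hhalf : (2⁻¹ : ℝ≥0∞) < 1 := by
    rw [ENNReal.inv_lt_one]; exact ENNReal.one_lt_two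
  have hpos : ∀ k : ℕ, (0 : ℝ≥0∞) < 2⁻¹ ^ k := fun k =>
    ENNReal.pow_pos (by simp) k
  choose A hAm hAd using fun k : ℕ => h (2⁻¹ ^ k) (hpos k)
  refine ⟨⋂ N : ℕ, ⋃ k : ℕ, ⋃ _ : N ≤ k, A k,
    MeasurableSet.iInter fun N => MeasurableSet.iUnion fun k =>
      MeasurableSet.iUnion fun _ => hAm k, ?_⟩
  set B := ⋂ N : ℕ, ⋃ k : ℕ, ⋃ _ : N ≤ k, A k with hB
  have h1 : ν (E \ B) = 0 := by
    have hsub : E \ B ⊆ ⋃ N : ℕ, ⋂ k : ℕ, ⋂ _ : N ≤ k, E ∆ A k := by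
      intro x hx
      have hxB := hx.2
      simp only [hB, mem_iInter, mem_iUnion, not_forall, not_exists] at hxB
      obtain ⟨N, hN⟩ := hxB
      exact mem_iUnion.2 ⟨N, mem_iInter₂.2 fun k hk =>
        Set.mem_symmDiff.2 (Or.inl ⟨hx.1, hN k hk⟩)⟩
    refine le_antisymm (le_trans (measure_mono hsub) (le_trans (measure_iUnion_le _) ?_))
      zero_le
    have hz : ∀ N : ℕ, ν (⋂ k : ℕ, ⋂ _ : N ≤ k, E ∆ A k) = 0 := by
      intro N
      refine ENNReal.eq_zero_of_le_mul_pow (ε := 2) hhalf fun j => ?_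
      have hk : ν (⋂ k : ℕ, ⋂ _ : N ≤ k, E ∆ A k) ≤ 2⁻¹ ^ max N j := by
        refine le_trans (measure_mono ?_) (hAd (max N j))
        exact fun x hx => mem_iInter₂.1 hx (max N j) (le_max_left _ _)
      refine hk.trans (le_trans (pow_le_pow_of_le_one zero_le hhalf.le
        (le_max_right N j)) ?_)
      rw [ENNReal.coe_two]
      exact le_mul_of_one_le_left zero_le one_le_two
    simp [hz]
  have h2 : ν (B \ E) = 0 := by
    refine ENNReal.eq_zero_of_le_mul_pow (ε := 2) hhalf fun N => ?_
    have hsub : B \ E ⊆ ⋃ d : ℕ, E ∆ A (N + d) := by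
      intro x hx
      have hN := mem_iInter.1 hx.1 N
      simp only [mem_iUnion] at hN
      obtain ⟨k, hk, hxk⟩ := hN
      refine mem_iUnion.2 ⟨k - N, ?_⟩
      rw [Nat.add_sub_cancel' hk]
      exact Set.mem_symmDiff.2 (Or.inr ⟨hxk, hx.2⟩)
    calc ν (B \ E) ≤ ∑' d : ℕ, ν (E ∆ A (N + d)) :=
          le_trans (measure_mono hsub) (measure_iUnion_le _)
      _ ≤ ∑' d : ℕ, (2⁻¹ : ℝ≥0∞) ^ (N + d) := ENNReal.tsum_le_tsum fun d => hAd _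
      _ = 2⁻¹ ^ N * ∑' d : ℕ, (2⁻¹ : ℝ≥0∞) ^ d := by
          simp_rw [pow_add]; rw [ENNReal.tsum_mul_left]
      _ = 2⁻¹ ^ N * 2 := by
          rw [ENNReal.tsum_geometric, ENNReal.one_sub_inv_two, inv_inv]
      _ ≤ ↑(2 : ℝ≥0) * 2⁻¹ ^ N := by
          rw [mul_comm, ENNReal.coe_two]
  have : ν (E ∆ B) ≤ ν (E \ B) + ν (B \ E) := by
    rw [Set.symmDiff_def]; exact measure_union_le _ _
  refine le_antisymm (by rw [h1, h2, add_zero] at this; exact this) zero_le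


section Pi

variable {X : Type*} [MeasurableSpace X] (μ : Measure X) [IsProbabilityMeasure μ] {n : ℕ}

/-- The `n`-th power of a set, inside the function space. -/
def pow (n : ℕ) (B : Set X) : Set (Fin n → X) := {x | ∀ i, x i ∈ B}

lemma pow_symmDiff_subset (n : ℕ) (B B' : Set X) :
    pow n B ∆ pow n B' ⊆ ⋃ i : Fin n, (fun x : Fin n → X => x i) ⁻¹' (B ∆ B') := by
  intro x hx
  rcases Set.mem_symmDiff.1 hx with ⟨h1, h2⟩ | ⟨h1, h2⟩
  · simp only [pow, mem_setOf_eq, not_forall] at h2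
    obtain ⟨i, hi⟩ := h2
    exact mem_iUnion.2 ⟨i, Set.mem_symmDiff.2 (Or.inl ⟨h1 i, hi⟩)⟩
  · simp only [pow, mem_setOf_eq, not_forall] at h2
    obtain ⟨i, hi⟩ := h2
    exact mem_iUnion.2 ⟨i, Set.mem_symmDiff.2 (Or.inr ⟨h1 i, hi⟩)⟩

lemma eval_preimage_eq_pi (i : Fin n) (s : Set X) :
    (fun x : Fin n → X => x i) ⁻¹' s = Set.pi univ (Function.update (fun _ => univ) i s) := by
  ext x
  simp only [mem_preimage, mem_pi, mem_univ, true_implies]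
  constructor
  · intro hx j
    rcases eq_or_ne j i with rfl | hj
    · simpa using hx
    · simp [Function.update_apply, hj]
  · intro hx
    simpa using hx i

lemma measure_eval_preimage (i : Fin n) (s : Set X) :
    (Measure.pi fun _ : Fin n => μ) ((fun x : Fin n → X => x i) ⁻¹' s) = μ s := by
  rw [eval_preimage_eq_pi, Measure.pi_pi]
  rw [Finset.prod_eq_single i ?_ ?_]
  · simp
  · intro j _ hj; simp [Function.update_apply, hj]
  · simp

lemma measure_pow_symmDiff_le (n : ℕ) (B B' : Set X) :
    (Measure.pi fun _ : Fin n => μ) (pow n B ∆ pow n B') ≤ n * μ (B ∆ B') := by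
  calc (Measure.pi fun _ : Fin n => μ) (pow n B ∆ pow n B')
      ≤ ∑' i : Fin n, (Measure.pi fun _ : Fin n => μ) ((fun x : Fin n → X => x i) ⁻¹' (B ∆ B')) :=
        le_trans (measure_mono (pow_symmDiff_subset n B B')) (measure_iUnion_le _)
    _ = ∑ i : Fin n, μ (B ∆ B') := by
        rw [tsum_fintype]
        exact Finset.sum_congr rfl fun i _ => measure_eval_preimage μ i _
    _ = n * μ (B ∆ B') := by
        rw [Finset.sum_const, Finset.card_univ, Fintype.card_fin, nsmul_eq_mul]

lemma measurePreserving_comp_perm (σ : Equiv.Perm (Fin n)) :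
    MeasurePreserving (fun x : Fin n → X => x ∘ σ)
      (Measure.pi fun _ : Fin n => μ) (Measure.pi fun _ : Fin n => μ) := by
  have hmeas : Measurable (fun x : Fin n → X => x ∘ σ) :=
    measurable_pi_lambda _ fun i => measurable_pi_apply (σ i)
  refine ⟨hmeas, ?_⟩
  refine (Measure.pi_eq (μ := fun _ : Fin n => μ) fun s hs => ?_).symm
  rw [Measure.map_apply hmeas (MeasurableSet.univ_pi hs)]
  have hpre : (fun x : Fin n → X => x ∘ σ) ⁻¹' Set.pi univ s
      = Set.pi univ fun j => s (σ.symm j) := by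
    ext x
    simp only [mem_preimage, mem_pi, mem_univ, true_implies, Function.comp]
    constructor
    · intro hx j
      simpa using hx (σ.symm j)
    · intro hx i
      simpa using hx (σ i)
  rw [hpre, Measure.pi_pi]
  exact Equiv.prod_comp σ.symm fun j => μ (s j)

end Pi

section Cells

variable {X : Type*} [MeasurableSpace X] [CountablyGenerated X]

/-- The cell data of `x` at level `m`. -/
def cOf (m : ℕ) (x : X) : Set (Fin m) := {k : Fin m | x ∈ natGeneratingSequence X k.val}

lemma measurable_cOf (m : ℕ) : Measurable (cOf (X := X) m) :=
  measurable_set_iff.2 fun k =>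
    measurable_mem.2 (measurableSet_natGeneratingSequence (α := X) k.val)

lemma cOf_castLE {m m' : ℕ} (h : m ≤ m') (x : X) :
    cOf m x = {k : Fin m | Fin.castLE h k ∈ cOf m' x} := by
  ext k; simp [cOf]

lemma cOf_eq_of_le {m m' : ℕ} (h : m ≤ m') {x y : X} (hxy : cOf m' x = cOf m' y) :
    cOf m x = cOf m y := by
  rw [cOf_castLE h x, cOf_castLE h y, hxy]

lemma eq_of_cOf [MeasurableSingletonClass X] {x y : X} (h : ∀ m, cOf m x = cOf m y) : x = y := by
  refine eq_of_natGeneratingSequence fun k => ?_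
  have := Set.ext_iff.1 (h (k + 1)) ⟨k, Nat.lt_succ_self k⟩
  simpa [cOf] using this

/-- Cell data of a tuple. -/
def CC (n m : ℕ) (x : Fin n → X) : Fin n → Set (Fin m) := fun i => cOf m (x i)

lemma measurable_CC (n m : ℕ) : Measurable (CC (X := X) n m) :=
  measurable_pi_lambda _ fun i => (measurable_cOf m).comp (measurable_pi_apply i)

lemma CC_lift {n m m' : ℕ} (h : m ≤ m') (U : Set (Fin n → Set (Fin m))) :
    CC (X := X) n m ⁻¹' U = CC n m' ⁻¹'
      ((fun u : Fin n → Set (Fin m') => fun i => {k : Fin m | Fin.castLE h k ∈ u i}) ⁻¹' U) := by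
  ext x
  simp only [mem_preimage]
  have : (fun i => {k : Fin m | Fin.castLE h k ∈ CC n m' x i}) = CC n m x :=
    funext fun i => (cOf_castLE h (x i)).symm
  rw [this]

lemma CC_comp_perm {n m : ℕ} (x : Fin n → X) (σ : Equiv.Perm (Fin n)) :
    CC (X := X) n m (x ∘ σ) = CC n m x ∘ σ := rfl

end Cells

section NoAtoms

variable {G X : Type*} [Group G] [MulAction G X] [MeasurableSpace X]
  [MeasurableSingletonClass X]

lemma meas_singleton_eq_zero (μ : Measure X) [IsProbabilityMeasure μ]
    (hmp : ∀ g : G, MeasurePreserving (fun x : X => g • x) μ μ)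
    (hanf : ∀ A : Set X, MeasurableSet A → ∀ ε : ℝ≥0∞, 0 < ε →
      ∃ g : G, μ (fixedSet G g ∆ A) < ε)
    (a : X) : μ {a} = 0 := by
  by_contra hne
  have hα : 0 < μ {a} := pos_iff_ne_zero.2 hne
  set L : Set X := {x | μ {a} ≤ μ {x}} with hL
  have hLc : L.Countable := by
    have hcount : {x : X | 0 < μ {x}}.Countable :=
      Measure.countable_meas_pos_of_disjoint_iUnion (As := fun x : X => {x})
        (fun x => measurableSet_singleton x)
        (fun x y hxy => by simpa using hxy)
    exact hcount.mono fun x hx => lt_of_lt_of_le hα hx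
  obtain ⟨g, hg⟩ := hanf (L \ {a}) ((hLc.mono diff_subset).measurableSet) (μ {a}) hα
  have ha : a ∉ fixedSet G g := by
    intro haf
    have hsub : {a} ⊆ fixedSet G g ∆ (L \ {a}) := by
      intro y hy
      rw [mem_singleton_iff] at hy; subst hy
      exact Set.mem_symmDiff.2 (Or.inl ⟨haf, fun hmem => hmem.2 rfl⟩)
    exact absurd (lt_of_le_of_lt (measure_mono hsub) hg) (lt_irrefl _)
  have hfix : ∀ b, b ∈ L → b ≠ a → g • b = b := by
    intro b hbL hba
    by_contra hbf
    have hsub : {b} ⊆ fixedSet G g ∆ (L \ {a}) := by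
      intro y hy
      rw [mem_singleton_iff] at hy; subst hy
      exact Set.mem_symmDiff.2 (Or.inr ⟨⟨hbL, by simpa using hba⟩, hbf⟩)
    exact absurd (lt_of_le_of_lt (le_trans hbL (measure_mono hsub)) hg) (lt_irrefl _)
  have hga : μ {g • a} = μ {a} := by
    have hpre := (hmp g).measure_preimage
      (measurableSet_singleton (g • a)).nullMeasurableSet
    rw [show (fun x : X => g • x) ⁻¹' {g • a} = {a} by
      ext y; simp [smul_left_cancel_iff]] at hpre
    exact hpre.symm
  have hgaL : g • a ∈ L := hga.ge
  have hgaa : g • a ≠ a := ha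
  have hcontr := hfix (g • a) hgaL hgaa
  exact hgaa (MulAction.injective g hcontr)

end NoAtoms

section DiagNull

variable {X : Type*} [MeasurableSpace X] [CountablyGenerated X] [MeasurableSingletonClass X]
  (μ : Measure X) [IsProbabilityMeasure μ] {n : ℕ}

lemma measure_pair_eq_zero (hatom : ∀ a : X, μ {a} = 0) {i j : Fin n} (hij : i ≠ j) :
    (Measure.pi fun _ : Fin n => μ) {x : Fin n → X | x i = x j} = 0 := by
  have hdm : MeasurableSet {p : X × X | p.1 = p.2} := by
    have heq : {p : X × X | p.1 = p.2} = ⋂ k : ℕ,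
        {p : X × X | p.1 ∈ natGeneratingSequence X k ↔ p.2 ∈ natGeneratingSequence X k} := by
      ext p
      constructor
      · intro hp
        refine mem_iInter.2 fun k => ?_
        simp only [mem_setOf_eq] at hp ⊢
        rw [hp]
      · intro hp
        exact eq_of_natGeneratingSequence fun k => mem_iInter.1 hp k
    rw [heq]
    refine MeasurableSet.iInter fun k => ?_
    exact measurableSet_mem_iff
      (measurable_fst (measurableSet_natGeneratingSequence k))
      (measurable_snd (measurableSet_natGeneratingSequence k))
  have hf : Measurable (fun x : Fin n → X => (x i, x j)) :=
    (measurable_pi_apply i).prodMk (measurable_pi_apply j)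
  have hmap : Measure.map (fun x : Fin n → X => (x i, x j)) (Measure.pi fun _ : Fin n => μ)
      = μ.prod μ := by
    refine (Measure.prod_eq fun s t hs ht => ?_).symm
    rw [Measure.map_apply hf (hs.prod ht)]
    have hpre : (fun x : Fin n → X => (x i, x j)) ⁻¹' (s ×ˢ t)
        = Set.pi univ (Function.update (Function.update (fun _ => univ) i s) j t) := by
      ext x
      simp only [mem_preimage, mem_prod, mem_pi, mem_univ, true_implies]
      constructor
      · intro hx k
        rcases eq_or_ne k j with rfl | hkj
        · simpa using hx.2
        · rcases eq_or_ne k i with rfl | hki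
          · simp only [Function.update_apply, if_neg hkj]
            simpa using hx.1
          · simp [Function.update_apply, hkj, hki]
      · intro hx
        have h1 := hx i
        have h2 := hx j
        rw [Function.update_apply, if_neg hij] at h1
        simp only [Function.update_self] at h1 h2
        exact ⟨by simpa using h1, h2⟩
    rw [hpre, Measure.pi_pi]
    rw [← Finset.prod_subset (Finset.subset_univ ({i, j} : Finset (Fin n))) ?_]
    · rw [Finset.prod_pair hij]
      have hfi : Function.update (Function.update (fun _ : Fin n => univ) i s) j t i = s := by
        rw [Function.update_apply, if_neg hij, Function.update_self]
      have hfj : Function.update (Function.update (fun _ : Fin n => univ) i s) j t j = t :=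
        Function.update_self _ _ _
      rw [hfi, hfj]
    · intro k _ hk
      simp only [Finset.mem_insert, Finset.mem_singleton, not_or] at hk
      simp [Function.update_apply, hk.1, hk.2]
  have hprod : (μ.prod μ) {p : X × X | p.1 = p.2} = 0 := by
    rw [Measure.prod_apply hdm]
    have hfib : ∀ x : X, (Prod.mk x ⁻¹' {p : X × X | p.1 = p.2}) = {x} := by
      intro x; ext y; simp [eq_comm]
    simp [hfib, hatom]
  have : {x : Fin n → X | x i = x j}
      = (fun x : Fin n → X => (x i, x j)) ⁻¹' {p : X × X | p.1 = p.2} := rfl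
  rw [this, ← Measure.map_apply hf hdm, hmap]
  exact hprod

end DiagNull
section ApproxSigma

variable {α : Type*} [mα : MeasurableSpace α]

/-- The σ-algebra of sets that agree with an `m'`-measurable set up to a `ν`-null set. -/
def approxSigma (ν : Measure α) (m' : MeasurableSpace α) : MeasurableSpace α where
  MeasurableSet' T := ∃ A, MeasurableSet[m'] A ∧ ν (T ∆ A) = 0
  measurableSet_empty := ⟨∅, @MeasurableSet.empty _ m', by simp⟩
  measurableSet_compl := fun s hs => by
    obtain ⟨A, hA, hsA⟩ := hs
    exact ⟨Aᶜ, hA.compl, by rwa [compl_symmDiff_compl]⟩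
  measurableSet_iUnion := fun f hf => by
    choose A hA hfA using hf
    refine ⟨⋃ k, A k, MeasurableSet.iUnion hA, ?_⟩
    have hsub : (⋃ k, f k) ∆ (⋃ k, A k) ⊆ ⋃ k, f k ∆ A k := by
      intro x hx
      rcases Set.mem_symmDiff.1 hx with ⟨h1, h2⟩ | ⟨h1, h2⟩
      · simp only [Set.mem_iUnion, not_exists] at h1 h2 ⊢
        obtain ⟨k, hk⟩ := h1
        exact ⟨k, Set.mem_symmDiff.2 (Or.inl ⟨hk, h2 k⟩)⟩
      · simp only [Set.mem_iUnion, not_exists] at h1 h2 ⊢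
        obtain ⟨k, hk⟩ := h1
        exact ⟨k, Set.mem_symmDiff.2 (Or.inr ⟨hk, h2 k⟩)⟩
    refine le_antisymm
      (le_trans (measure_mono hsub) (le_trans (measure_iUnion_le _) ?_)) zero_le
    simp [hfA]

end ApproxSigma

/-- The σ-algebra generated by the powers of fixed-point sets. -/
def fixSigma (G X : Type*) [SMul G X] [MeasurableSpace X] (n : ℕ) :
    MeasurableSpace (Fin n → X) :=
  MeasurableSpace.generateFrom {s : Set (Fin n → X) | ∃ g : G, s = fixedPow G n g}

end ANF

/-- If a countable group acts absolutely non-freely on a standard Borel probability space, then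
for every `n ≥ 1` the symmetrized diagonal action on `Xⁿ` is totally non-free: every measurable
set invariant under all coordinate permutations agrees, up to a `μⁿ`-null symmetric difference,
with a set in the σ-algebra generated by the sets `Fix(g)ⁿ`, `g ∈ G`. -/
theorem symmetrizedDiagonal_totallyNonFree_of_absolutelyNonFree
    {G X : Type*} [Group G] [Countable G] [MulAction G X]
    [MeasurableSpace X] [StandardBorelSpace X]
    (μ : Measure X) [IsProbabilityMeasure μ]
    (hmeas : ∀ g : G, Measurable fun x : X => g • x)
    (hmp : ∀ g : G, MeasurePreserving (fun x : X => g • x) μ μ)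
    (hanf : AbsolutelyNonFree G μ)
    (n : ℕ) (hn : 1 ≤ n) :
    ∀ E : Set (Fin n → X), MeasurableSet E →
      (∀ σ : Equiv.Perm (Fin n), (fun x : Fin n → X => x ∘ σ) ⁻¹' E = E) →
      ∃ A : Set (Fin n → X),
        MeasurableSet[MeasurableSpace.generateFrom
          {s : Set (Fin n → X) | ∃ g : G, s = fixedPow G n g}] A ∧
        (Measure.pi fun _ : Fin n => μ) (E ∆ A) = 0 := by
  classical
  intro E hE hEsym
  set ν : Measure (Fin n → X) := Measure.pi fun _ : Fin n => μ with hν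
  refine ANF.exists_symmDiff_null (m' := ANF.fixSigma G X n) ν E fun ε hε => ?_
  -- the fixed-point sets are measurable
  have hFixMeas : ∀ g : G, MeasurableSet (fixedSet G g : Set X) := by
    intro g
    have heq : fixedSet G g = ⋂ k : ℕ,
        {x : X | g • x ∈ MeasurableSpace.natGeneratingSequence X k
          ↔ x ∈ MeasurableSpace.natGeneratingSequence X k} := by
      ext x
      constructor
      · intro hx
        refine Set.mem_iInter.2 fun k => ?_
        have : g • x = x := hx
        simp only [Set.mem_setOf_eq, this]
      · intro hx
        exact ANF.eq_of_natGeneratingSequence fun k => Set.mem_iInter.1 hx k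
    rw [heq]
    refine MeasurableSet.iInter fun k => ?_
    exact ANF.measurableSet_mem_iff
      ((hmeas g) (MeasurableSpace.measurableSet_natGeneratingSequence k))
      (MeasurableSpace.measurableSet_natGeneratingSequence k)
  -- powers of measurable sets are in the σ-algebra 𝔅 up to null sets
  have hpow𝒟 : ∀ B : Set X, MeasurableSet B →
      ∃ A, MeasurableSet[ANF.fixSigma G X n] A ∧ ν (ANF.pow n B ∆ A) = 0 := by
    intro B hB
    refine ANF.exists_symmDiff_null (m' := ANF.fixSigma G X n) ν _ fun δ hδ => ?_
    obtain ⟨g, hg⟩ := hanf B hB (δ / n)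
      (ENNReal.div_pos hδ.ne' (ENNReal.natCast_ne_top n))
    refine ⟨fixedPow G n g, MeasurableSpace.measurableSet_generateFrom ⟨g, rfl⟩, ?_⟩
    have h1 : fixedPow G n g = ANF.pow n (fixedSet G g : Set X) := rfl
    calc ν (ANF.pow n B ∆ fixedPow G n g)
        ≤ n * μ (B ∆ (fixedSet G g : Set X)) := by
          rw [h1, hν]; exact ANF.measure_pow_symmDiff_le μ n B (fixedSet G g : Set X)
      _ ≤ n * (δ / n) := by
          gcongr
          rw [symmDiff_comm]
          exact hg.le
      _ ≤ δ := ENNReal.mul_div_le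
  have hpow𝒟' : ∀ B : Set X, MeasurableSet B →
      MeasurableSet[ANF.approxSigma ν (ANF.fixSigma G X n)] (ANF.pow n B) := hpow𝒟
  -- the algebra of cylinder sets
  set 𝒜 : Set (Set (Fin n → X)) := {T | ∃ m U, T = ANF.CC n m ⁻¹' U} with h𝒜
  have halg : IsSetAlgebra 𝒜 := by
    constructor
    · exact ⟨0, ∅, by simp⟩
    · rintro s ⟨m, U, rfl⟩
      exact ⟨m, Uᶜ, rfl⟩
    · rintro s t ⟨m1, U1, rfl⟩ ⟨m2, U2, rfl⟩
      refine ⟨max m1 m2, ?_, ?_⟩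
      · exact ((fun u : Fin n → Set (Fin (max m1 m2)) => fun i =>
            {k : Fin m1 | Fin.castLE (le_max_left m1 m2) k ∈ u i}) ⁻¹' U1) ∪
          ((fun u : Fin n → Set (Fin (max m1 m2)) => fun i =>
            {k : Fin m2 | Fin.castLE (le_max_right m1 m2) k ∈ u i}) ⁻¹' U2)
      · rw [Set.preimage_union, ← ANF.CC_lift (le_max_left m1 m2) U1,
          ← ANF.CC_lift (le_max_right m1 m2) U2]
  have hgen : (MeasurableSpace.pi : MeasurableSpace (Fin n → X)) = MeasurableSpace.generateFrom 𝒜 := by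
    refine le_antisymm ?_ (MeasurableSpace.generateFrom_le ?_)
    ·
      refine iSup_le fun i => ?_
      conv_lhs => rw [← MeasurableSpace.generateFrom_natGeneratingSequence X]
      rw [MeasurableSpace.comap_generateFrom]
      refine MeasurableSpace.generateFrom_le ?_
      rintro t ⟨s', ⟨k, rfl⟩, rfl⟩
      refine MeasurableSpace.measurableSet_generateFrom
        ⟨k + 1, {u : Fin n → Set (Fin (k + 1)) | (⟨k, Nat.lt_succ_self k⟩ : Fin (k + 1)) ∈ u i},
          ?_⟩
      ext x
      simp [ANF.CC, ANF.cOf]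
    · rintro t ⟨m, U, rfl⟩
      exact ANF.measurable_CC n m ((Set.to_countable U).measurableSet)
  have hdense := Measure.MeasureDense.of_generateFrom_isSetAlgebra_finite (μ := ν) halg hgen
  have happrox : ∀ δ : ℝ≥0∞, 0 < δ → ∃ m U, ν (E ∆ (ANF.CC n m ⁻¹' U)) ≤ δ := by
    intro δ hδ
    rcases eq_or_ne δ ⊤ with rfl | hδ'
    · obtain ⟨t, ⟨m, U, rfl⟩, -⟩ := hdense.approx E hE (measure_ne_top _ _) 1 one_pos
      exact ⟨m, U, le_top⟩
    · obtain ⟨t, ⟨m, U, rfl⟩, ht⟩ := hdense.approx E hE (measure_ne_top _ _) δ.toReal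
        (ENNReal.toReal_pos hδ.ne' hδ')
      refine ⟨m, U, ht.le.trans ?_⟩
      rw [ENNReal.ofReal_toReal hδ']
  -- the quasi-diagonal sets
  have hatom : ∀ a : X, μ {a} = 0 := ANF.meas_singleton_eq_zero μ hmp hanf
  set P : ℕ → Fin n → Fin n → Set (Fin n → X) :=
    fun m i j => {x | ANF.cOf m (x i) = ANF.cOf m (x j)} with hP
  have hPmeas : ∀ m i j, MeasurableSet (P m i j) := by
    intro m i j
    have : P m i j = (fun x : Fin n → X => (ANF.cOf m (x i), ANF.cOf m (x j))) ⁻¹'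
        {p : Set (Fin m) × Set (Fin m) | p.1 = p.2} := rfl
    rw [this]
    exact (((ANF.measurable_cOf m).comp (measurable_pi_apply i)).prodMk
      ((ANF.measurable_cOf m).comp (measurable_pi_apply j)))
      ((Set.to_countable _).measurableSet)
  have hPtend : ∀ i j, i ≠ j →
      Filter.Tendsto (fun m => ν (P m i j)) Filter.atTop (nhds 0) := by
    intro i j hij
    have h0 : ν (⋂ m, P m i j) = 0 := by
      refine le_antisymm (le_trans (measure_mono ?_) (ANF.measure_pair_eq_zero μ hatom hij).le)
        zero_le
      intro x hx
      exact ANF.eq_of_cOf fun m => Set.mem_iInter.1 hx m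
    have htend := tendsto_measure_iInter_atTop (μ := ν)
      (fun m => (hPmeas m i j).nullMeasurableSet)
      (fun m m' hmm' x hx => ANF.cOf_eq_of_le hmm' hx)
      ⟨0, measure_ne_top _ _⟩
    rwa [h0] at htend
  have hsumtend : Filter.Tendsto
      (fun m => ∑ p ∈ Finset.univ.offDiag, ν (P m p.1 p.2)) Filter.atTop (nhds 0) := by
    have := tendsto_finset_sum (Finset.univ.offDiag (α := Fin n))
      (fun p hp => hPtend p.1 p.2 (Finset.mem_offDiag.1 hp).2.2)
    simpa using this
  have hεhalf : (0 : ℝ≥0∞) < ε / 2 := ENNReal.half_pos hε.ne'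
  obtain ⟨m₀, hm₀⟩ := Filter.eventually_atTop.1 (hsumtend.eventually_lt_const hεhalf)
  -- choose the approximating cylinder set
  set cP : ℝ≥0∞ := (Fintype.card (Equiv.Perm (Fin n)) : ℝ≥0∞) with hcP
  have hδpos : (0 : ℝ≥0∞) < ε / 2 / cP :=
    ENNReal.div_pos hεhalf.ne' (ENNReal.natCast_ne_top _)
  obtain ⟨m₁, U₁, hU₁⟩ := happrox _ hδpos
  set M := max m₀ m₁ with hM
  set U₂ : Set (Fin n → Set (Fin M)) := (fun u : Fin n → Set (Fin M) => fun i =>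
    {k : Fin m₁ | Fin.castLE (le_max_right m₀ m₁) k ∈ u i}) ⁻¹' U₁ with hU₂
  rw [ANF.CC_lift (le_max_right m₀ m₁) U₁] at hU₁
  -- symmetrize
  set Usym : Set (Fin n → Set (Fin M)) := {u | ∃ σ : Equiv.Perm (Fin n), u ∘ σ ∈ U₂} with hUsym
  have hU₂meas : MeasurableSet (ANF.CC (X := X) n M ⁻¹' U₂) :=
    ANF.measurable_CC n M ((Set.to_countable _).measurableSet)
  have hUsymsub : E ∆ (ANF.CC n M ⁻¹' Usym) ⊆ ⋃ σ : Equiv.Perm (Fin n),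
      (fun x : Fin n → X => x ∘ σ) ⁻¹' (E ∆ (ANF.CC n M ⁻¹' U₂)) := by
    intro x hx
    rcases Set.mem_symmDiff.1 hx with ⟨h1, h2⟩ | ⟨h1, h2⟩
    · refine Set.mem_iUnion.2 ⟨1, ?_⟩
      show x ∘ (1 : Equiv.Perm (Fin n)) ∈ E ∆ (ANF.CC n M ⁻¹' U₂)
      rw [show x ∘ (1 : Equiv.Perm (Fin n)) = x from rfl]
      exact Set.mem_symmDiff.2 (Or.inl ⟨h1, fun hmem => h2 ⟨1, hmem⟩⟩)
    · obtain ⟨σ, hσ⟩ := h1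
      refine Set.mem_iUnion.2 ⟨σ, ?_⟩
      show x ∘ σ ∈ E ∆ (ANF.CC n M ⁻¹' U₂)
      refine Set.mem_symmDiff.2 (Or.inr ⟨hσ, ?_⟩)
      intro hmem
      have hxE : x ∈ (fun x : Fin n → X => x ∘ σ) ⁻¹' E := hmem
      rw [hEsym σ] at hxE
      exact h2 hxE
  have hUsymbound : ν (E ∆ (ANF.CC n M ⁻¹' Usym)) ≤ ε / 2 := by
    calc ν (E ∆ (ANF.CC n M ⁻¹' Usym))
        ≤ ∑' σ : Equiv.Perm (Fin n),
            ν ((fun x : Fin n → X => x ∘ σ) ⁻¹' (E ∆ (ANF.CC n M ⁻¹' U₂))) :=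
          le_trans (measure_mono hUsymsub) (measure_iUnion_le _)
      _ = ∑' σ : Equiv.Perm (Fin n), ν (E ∆ (ANF.CC n M ⁻¹' U₂)) := by
          refine tsum_congr fun σ => ?_
          exact (ANF.measurePreserving_comp_perm μ σ).measure_preimage
            (hE.symmDiff hU₂meas).nullMeasurableSet
      _ = cP * ν (E ∆ (ANF.CC n M ⁻¹' U₂)) := by
          rw [tsum_fintype, Finset.sum_const, Finset.card_univ, nsmul_eq_mul, hcP]
      _ ≤ cP * (ε / 2 / cP) := by gcongr
      _ ≤ ε / 2 := ENNReal.mul_div_le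
  -- remove the quasi-diagonal part
  set V : Set (Fin n → Set (Fin M)) := Usym ∩ {u | Function.Injective u} with hV
  set W : Set (Fin n → X) := ANF.CC n M ⁻¹' V with hW
  have hNon : ν (ANF.CC n M ⁻¹' {u : Fin n → Set (Fin M) | ¬ Function.Injective u}) ≤ ε / 2 := by
    have hsub : ANF.CC n M ⁻¹' {u : Fin n → Set (Fin M) | ¬ Function.Injective u}
        ⊆ ⋃ p ∈ Finset.univ.offDiag (α := Fin n), P M p.1 p.2 := by
      intro x hx
      obtain ⟨i, j, hias, hne⟩ := Function.not_injective_iff.1 hx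
      have hpmem : ((i, j) : Fin n × Fin n) ∈ Finset.univ.offDiag :=
        Finset.mem_offDiag.2 ⟨Finset.mem_univ _, Finset.mem_univ _, hne⟩
      exact Set.mem_biUnion hpmem hias
    refine le_trans (measure_mono hsub) (le_trans (measure_biUnion_finset_le _ _) ?_)
    exact (hm₀ M (le_max_left m₀ m₁)).le
  have hWd : ν (E ∆ W) ≤ ε := by
    have hsub : E ∆ W ⊆ (E ∆ (ANF.CC n M ⁻¹' Usym)) ∪
        (ANF.CC n M ⁻¹' {u : Fin n → Set (Fin M) | ¬ Function.Injective u}) := by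
      intro x hx
      rcases Set.mem_symmDiff.1 hx with ⟨h1, h2⟩ | ⟨h1, h2⟩
      · by_cases hinj : Function.Injective (ANF.CC n M x)
        · refine Or.inl (Set.mem_symmDiff.2 (Or.inl ⟨h1, fun hmem => h2 ⟨hmem, hinj⟩⟩))
        · exact Or.inr hinj
      · exact Or.inl (Set.mem_symmDiff.2 (Or.inr ⟨h1.1, h2⟩))
    calc ν (E ∆ W) ≤ ν (E ∆ (ANF.CC n M ⁻¹' Usym)) +
          ν (ANF.CC n M ⁻¹' {u : Fin n → Set (Fin M) | ¬ Function.Injective u}) :=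
        le_trans (measure_mono hsub) (measure_union_le _ _)
      _ ≤ ε / 2 + ε / 2 := add_le_add hUsymbound hNon
      _ = ε := ENNReal.add_halves ε
  -- W is measurable with respect to m𝒟
  have hVsym : ∀ u ∈ V, ∀ σ : Equiv.Perm (Fin n), u ∘ σ ∈ V := by
    rintro u ⟨⟨σ', hσ'⟩, hinj⟩ σ
    refine ⟨⟨σ'.trans σ.symm, ?_⟩, hinj.comp σ.injective⟩
    have : (u ∘ σ) ∘ (σ'.trans σ.symm : Equiv.Perm (Fin n)) = u ∘ σ' := by
      funext i; simp
    rwa [this]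
  set cell : Set (Fin M) → Set X := fun w => {y : X | ANF.cOf M y = w} with hcell
  have hcellmeas : ∀ w, MeasurableSet (cell w) := fun w =>
    (ANF.measurable_cOf M) (measurableSet_singleton w)
  set T : (Fin n → Set (Fin M)) → Set (Fin n → X) := fun u =>
    ANF.pow n (⋃ j : Fin n, cell (u j)) ∩
      ⋂ i : Fin n, (ANF.pow n (⋃ j : Fin n, ⋃ _ : j ≠ i, cell (u j)))ᶜ with hT
  have hTmeas : ∀ u, MeasurableSet[ANF.approxSigma ν (ANF.fixSigma G X n)] (T u) := by
    intro u
    refine MeasurableSet.inter ?_ (MeasurableSet.iInter fun i => MeasurableSet.compl ?_)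
    · exact hpow𝒟' _ (MeasurableSet.iUnion fun j => hcellmeas (u j))
    · exact hpow𝒟' _ (MeasurableSet.iUnion fun j =>
        MeasurableSet.iUnion fun _ => hcellmeas (u j))
  have hWeq : W = ⋃ u ∈ V, T u := by
    ext x
    constructor
    · intro hx
      have hxV : ANF.CC n M x ∈ V := hx
      refine Set.mem_biUnion hxV ?_
      constructor
      · intro i
        exact Set.mem_iUnion.2 ⟨i, rfl⟩
      · refine Set.mem_iInter.2 fun i => ?_
        intro hmem
        have hii := hmem i
        simp only [Set.mem_iUnion] at hii
        obtain ⟨j, hji, hcellj⟩ := hii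
        have : ANF.CC n M x i = ANF.CC n M x j := hcellj
        exact hji (hxV.2 this).symm
    · intro hx
      obtain ⟨u, huV, hxT⟩ := Set.mem_iUnion₂.1 hx
      have h1 : ∀ i, ∃ j, ANF.cOf M (x i) = u j := by
        intro i
        have := hxT.1 i
        simpa [ANF.pow, Set.mem_iUnion, hcell] using this
      choose J hJ using h1
      have hJsurj : Function.Surjective J := by
        intro j
        have h2 := Set.mem_iInter.1 hxT.2 j
        have h3 : ∃ i, x i ∉ ⋃ j' : Fin n, ⋃ _ : j' ≠ j, cell (u j') := by
          by_contra hcon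
          push_neg at hcon
          exact h2 fun i => hcon i
        obtain ⟨i, hi⟩ := h3
        refine ⟨i, ?_⟩
        by_contra hne
        refine hi (Set.mem_iUnion.2 ⟨J i, Set.mem_iUnion.2 ⟨hne, hJ i⟩⟩)
      have hJbij : Function.Bijective J := Finite.surjective_iff_bijective.1 hJsurj
      have hCx : ANF.CC n M x = u ∘ Equiv.ofBijective J hJbij :=
        funext fun i => hJ i
      show ANF.CC n M x ∈ V
      rw [hCx]
      exact hVsym u huV _
  have hWD : MeasurableSet[ANF.approxSigma ν (ANF.fixSigma G X n)] W := by
    rw [hWeq]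
    exact MeasurableSet.biUnion (Set.to_countable V) fun u _ => hTmeas u
  obtain ⟨A, hA𝔅, hWA⟩ := hWD
  refine ⟨A, hA𝔅, ?_⟩
  calc ν (E ∆ A) ≤ ν (E ∆ W) + ν (W ∆ A) := measure_symmDiff_le _ _ _
    _ ≤ ε + 0 := add_le_add hWd hWA.le
    _ = ε := add_zero ε
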